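/- Let (z, z') ∈ ℂ². The expression 1/(Γ(z-k+1)Γ(z'-k+1)) is nonnegative (real and ≥ 0) for all k ∈ ℤ if and only if either (i) z' = z̄ and z ∉ ℝ, or (ii) z, z' ∈ ℝ and there exists m ∈ ℤ with m < z, z' < m+1, or (iii) there is m ∈ ℤ with (z = m and z' ∈ ℝ, z' > m-1) or (z' = m and z ∈ ℝ, z > m-1). -/
import Mathlib


open Complex in
lemma invGamma_rec (s : ℂ) : (Complex.Gamma s)⁻¹ = s * (Complex.Gamma (s + 1))⁻¹ := by
  by_cases h0 : s = 0
  · simp [h0, Complex.Gamma_zero]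
  · rw [Complex.Gamma_add_one s h0]
    by_cases hg : Complex.Gamma s = 0
    · simp [hg]
    · field_simp

lemma real_invGamma_rec (s : ℝ) : (Real.Gamma s)⁻¹ = s * (Real.Gamma (s + 1))⁻¹ := by
  by_cases h0 : s = 0
  · simp [h0, Real.Gamma_zero]
  · rw [Real.Gamma_add_one h0]
    by_cases hg : Real.Gamma s = 0
    · simp [hg]
    · field_simp

/-- sign of real Gamma on negative intervals -/
lemma gamma_sign (n : ℕ) : ∀ t : ℝ, -(n:ℝ) < t → t < -(n:ℝ) + 1 → 0 < (-1 : ℝ)^n * Real.Gamma t := by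
  induction n with
  | zero => intro t h1 h2; simpa using Real.Gamma_pos_of_pos (by simpa using h1)
  | succ n ih =>
    intro t h1 h2
    have ht0 : t < 0 := by
      have hn : (0:ℝ) ≤ n := Nat.cast_nonneg n
      push_cast at h2; linarith
    have hne : t ≠ 0 := ne_of_lt ht0
    have hih := ih (t + 1) (by push_cast at h1 ⊢; linarith) (by push_cast at h2 ⊢; linarith)
    rw [Real.Gamma_add_one hne] at hih
    have key : (-1:ℝ)^(n+1) * Real.Gamma t
        = ((-1)^n * (t * Real.Gamma t)) / (-t) := by
      rw [eq_div_iff (by linarith : (-t) ≠ 0)]; ring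
    rw [key]
    exact div_pos hih (by linarith)

lemma pair_rec (z z' : ℂ) (k : ℤ) :
    (Complex.Gamma (z - (k+1 : ℤ) + 1) * Complex.Gamma (z' - (k+1 : ℤ) + 1))⁻¹
      = (z - k) * (z' - k) * (Complex.Gamma (z - k + 1) * Complex.Gamma (z' - k + 1))⁻¹ := by
  have e1 : z - (k+1 : ℤ) + 1 = z - k := by push_cast; ring
  have e2 : z' - (k+1 : ℤ) + 1 = z' - k := by push_cast; ring
  rw [e1, e2, mul_inv, mul_inv, invGamma_rec (z - k), invGamma_rec (z' - k)]
  ring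

lemma real_pair_rec (x y : ℝ) (k : ℤ) :
    (Real.Gamma (x - (k+1 : ℤ) + 1) * Real.Gamma (y - (k+1 : ℤ) + 1))⁻¹
      = (x - k) * (y - k) * (Real.Gamma (x - k + 1) * Real.Gamma (y - k + 1))⁻¹ := by
  have e1 : x - (k+1 : ℤ) + 1 = x - k := by push_cast; ring
  have e2 : y - (k+1 : ℤ) + 1 = y - k := by push_cast; ring
  rw [e1, e2, mul_inv, mul_inv, real_invGamma_rec (x - k), real_invGamma_rec (y - k)]
  ring

lemma real_reduce (x y : ℝ) (k : ℤ) :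
    (Complex.Gamma ((x:ℂ) - k + 1) * Complex.Gamma ((y:ℂ) - k + 1))⁻¹
      = (((Real.Gamma (x - k + 1) * Real.Gamma (y - k + 1))⁻¹ : ℝ) : ℂ) := by
  have e1 : (x:ℂ) - k + 1 = ((x - k + 1 : ℝ) : ℂ) := by push_cast; ring
  have e2 : (y:ℂ) - k + 1 = ((y - k + 1 : ℝ) : ℂ) := by push_cast; ring
  rw [e1, e2, Complex.Gamma_ofReal, Complex.Gamma_ofReal, ← Complex.ofReal_mul,
    ← Complex.ofReal_inv]

/-- Backward: real pair both in (m, m+1). -/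
lemma bwd_interval (x y : ℝ) (m : ℤ) (h1 : (m:ℝ) < x) (h2 : x < m + 1)
    (h3 : (m:ℝ) < y) (h4 : y < m + 1) (k : ℤ) :
    0 ≤ (Real.Gamma (x - k + 1) * Real.Gamma (y - k + 1))⁻¹ := by
  rw [inv_nonneg]
  rcases le_or_gt k (m + 1) with hk | hk
  · have hk' : (k:ℝ) ≤ m + 1 := by exact_mod_cast hk
    have px : 0 < x - k + 1 := by linarith
    have py : 0 < y - k + 1 := by linarith
    exact le_of_lt (mul_pos (Real.Gamma_pos_of_pos px) (Real.Gamma_pos_of_pos py))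
  · -- k ≥ m + 2
    have hk2 : m + 2 ≤ k := by omega
    set n : ℕ := (k - m - 1).toNat with hn
    have hnk : (n : ℝ) = (k : ℝ) - m - 1 := by
      have h := Int.toNat_of_nonneg (by omega : (0:ℤ) ≤ k - m - 1)
      rw [hn]; exact_mod_cast h
    have sx : 0 < (-1:ℝ)^n * Real.Gamma (x - k + 1) :=
      gamma_sign n _ (by rw [hnk]; linarith) (by rw [hnk]; linarith)
    have sy : 0 < (-1:ℝ)^n * Real.Gamma (y - k + 1) :=
      gamma_sign n _ (by rw [hnk]; linarith) (by rw [hnk]; linarith)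
    have h12 := mul_pos sx sy
    have hsq : ((-1:ℝ)^n) * ((-1:ℝ)^n) = 1 := by
      rw [← pow_add, ← two_mul, pow_mul]; norm_num
    rw [show ((-1:ℝ)^n * Real.Gamma (x - k + 1)) * ((-1:ℝ)^n * Real.Gamma (y - k + 1))
        = ((-1:ℝ)^n * (-1:ℝ)^n) * (Real.Gamma (x - k + 1) * Real.Gamma (y - k + 1)) from by ring,
      hsq, one_mul] at h12
    exact le_of_lt h12

/-- Backward: degenerate, z = m, y > m - 1. -/
lemma bwd_degen (y : ℝ) (m : ℤ) (hy : (m:ℝ) - 1 < y) (k : ℤ) :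
    0 ≤ (Real.Gamma ((m:ℝ) - k + 1) * Real.Gamma (y - k + 1))⁻¹ := by
  rw [inv_nonneg]
  rcases le_or_gt k m with hk | hk
  · have hk' : (k:ℝ) ≤ m := by exact_mod_cast hk
    have px : 0 < (m:ℝ) - k + 1 := by linarith
    have py : 0 < y - k + 1 := by linarith
    exact le_of_lt (mul_pos (Real.Gamma_pos_of_pos px) (Real.Gamma_pos_of_pos py))
  · set n : ℕ := (k - m - 1).toNat with hn
    have hz : (m:ℝ) - k + 1 = -(n:ℝ) := by
      have h := Int.toNat_of_nonneg (by omega : (0:ℤ) ≤ k - m - 1)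
      have h' : (n:ℝ) = (k:ℝ) - m - 1 := by rw [hn]; exact_mod_cast h
      rw [h']; ring
    rw [hz, Real.Gamma_neg_nat_eq_zero, zero_mul]


/-- For `(z, z') ∈ ℂ²`, the quantity `1/(Γ(z-k+1)Γ(z'-k+1))` is a nonnegative real for
every `k ∈ ℤ` if and only if `(z,z')` lies in the principal series (`z' = z̄`, `z ∉ ℝ`),
the complementary series (`z, z'` real, both in some interval `(m, m+1)` with `m ∈ ℤ`),
or the degenerate series (`z = m ∈ ℤ` with `z'` real, `z' > m-1`, or symmetrically). -/
theorem inv_gamma_pair_nonneg_iff (z z' : ℂ) :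
    (∀ k : ℤ, ∃ r : ℝ, 0 ≤ r ∧
        (Complex.Gamma (z - k + 1) * Complex.Gamma (z' - k + 1))⁻¹ = (r : ℂ))
      ↔ ((z' = (starRingEnd ℂ) z ∧ z.im ≠ 0) ∨
          (z.im = 0 ∧ z'.im = 0 ∧
            ∃ m : ℤ, (m : ℝ) < z.re ∧ z.re < m + 1 ∧ (m : ℝ) < z'.re ∧ z'.re < m + 1) ∨
          (∃ m : ℤ, (z = (m : ℂ) ∧ z'.im = 0 ∧ (m : ℝ) - 1 < z'.re) ∨
            (z' = (m : ℂ) ∧ z.im = 0 ∧ (m : ℝ) - 1 < z.re))) := by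
  constructor
  · intro H
    set k₀ : ℤ := min ⌊z.re⌋ ⌊z'.re⌋ with hk₀
    have hGz : ∀ k : ℤ, k ≤ k₀ → Complex.Gamma (z - k + 1) ≠ 0 := by
      intro k hk
      apply Complex.Gamma_ne_zero
      intro n hn
      have hre := congrArg Complex.re hn
      simp only [Complex.sub_re, Complex.add_re, Complex.intCast_re, Complex.one_re,
        Complex.neg_re, Complex.natCast_re] at hre
      have h1 : (⌊z.re⌋ : ℝ) ≤ z.re := Int.floor_le _
      have h2 : (k : ℝ) ≤ (⌊z.re⌋ : ℝ) := by exact_mod_cast le_trans hk (min_le_left _ _)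
      have h3 : (0:ℝ) ≤ n := Nat.cast_nonneg n
      linarith
    have hGz' : ∀ k : ℤ, k ≤ k₀ → Complex.Gamma (z' - k + 1) ≠ 0 := by
      intro k hk
      apply Complex.Gamma_ne_zero
      intro n hn
      have hre := congrArg Complex.re hn
      simp only [Complex.sub_re, Complex.add_re, Complex.intCast_re, Complex.one_re,
        Complex.neg_re, Complex.natCast_re] at hre
      have h1 : (⌊z'.re⌋ : ℝ) ≤ z'.re := Int.floor_le _
      have h2 : (k : ℝ) ≤ (⌊z'.re⌋ : ℝ) := by exact_mod_cast le_trans hk (min_le_right _ _)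
      have h3 : (0:ℝ) ≤ n := Nat.cast_nonneg n
      linarith
    have hpos : ∀ k : ℤ, k ≤ k₀ → ∃ r : ℝ, 0 < r ∧
        (Complex.Gamma (z - k + 1) * Complex.Gamma (z' - k + 1))⁻¹ = (r : ℂ) := by
      intro k hk
      obtain ⟨r, hr, he⟩ := H k
      refine ⟨r, lt_of_le_of_ne hr ?_, he⟩
      intro h0
      rw [← h0] at he
      exact inv_ne_zero (mul_ne_zero (hGz k hk) (hGz' k hk)) (by exact_mod_cast he)
    have hq : ∀ k : ℤ, k + 1 ≤ k₀ → ∃ c : ℝ, 0 < c ∧ (z - k) * (z' - k) = (c : ℂ) := by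
      intro k hk
      obtain ⟨r0, hr0, he0⟩ := hpos k (by omega)
      obtain ⟨r1, hr1, he1⟩ := hpos (k+1) (by omega)
      have hrec := pair_rec z z' k
      rw [he0, he1] at hrec
      refine ⟨r1 / r0, div_pos hr1 hr0, ?_⟩
      have hr0' : (r0 : ℂ) ≠ 0 := by exact_mod_cast hr0.ne'
      rw [Complex.ofReal_div, eq_div_iff hr0']
      exact hrec.symm
    obtain ⟨c₁, hc₁, e₁⟩ := hq (k₀ - 2) (by omega)
    obtain ⟨c₂, hc₂, e₂⟩ := hq (k₀ - 3) (by omega)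
    have E₁ : (z.re - ((k₀:ℝ) - 2)) * z'.im + z.im * (z'.re - ((k₀:ℝ) - 2)) = 0 := by
      have h := congrArg Complex.im e₁
      simp only [Complex.mul_im, Complex.sub_im, Complex.sub_re, Complex.intCast_im,
        Complex.intCast_re, Complex.ofReal_im] at h
      push_cast at h
      linarith
    have E₂ : (z.re - ((k₀:ℝ) - 3)) * z'.im + z.im * (z'.re - ((k₀:ℝ) - 3)) = 0 := by
      have h := congrArg Complex.im e₂
      simp only [Complex.mul_im, Complex.sub_im, Complex.sub_re, Complex.intCast_im,
        Complex.intCast_re, Complex.ofReal_im] at h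
      push_cast at h
      linarith
    have hS : z.im + z'.im = 0 := by linear_combination E₂ - E₁
    have hP : z.re * z'.im + z.im * z'.re = 0 := by linear_combination E₁ + ((k₀:ℝ) - 2) * hS
    by_cases him : z.im = 0
    · -- real case
      have him' : z'.im = 0 := by linarith
      have hz : z = ((z.re : ℝ) : ℂ) := Complex.ext rfl (by simp [him])
      have hz' : z' = ((z'.re : ℝ) : ℂ) := Complex.ext rfl (by simp [him'])
      have hg : ∀ k : ℤ, 0 ≤ (Real.Gamma (z.re - k + 1) * Real.Gamma (z'.re - k + 1))⁻¹ := by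
        intro k
        obtain ⟨r, hr, he⟩ := H k
        rw [hz, hz', real_reduce] at he
        have := Complex.ofReal_inj.mp he
        rw [this]
        exact hr
      by_cases hxi : ∃ mi : ℤ, z.re = (mi : ℝ)
      · obtain ⟨mx, hmx⟩ := hxi
        by_cases hyi : ∃ mi : ℤ, z'.re = (mi : ℝ)
        · -- both integers
          obtain ⟨my, hmy⟩ := hyi
          rcases le_total mx my with hle | hle
          · refine Or.inr (Or.inr ⟨mx, Or.inl ⟨?_, him', ?_⟩⟩)
            · rw [hz, hmx]; push_cast; rfl
            · have : (mx:ℝ) ≤ (my:ℝ) := by exact_mod_cast hle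
              rw [hmy]; linarith
          · refine Or.inr (Or.inr ⟨my, Or.inr ⟨?_, him, ?_⟩⟩)
            · rw [hz', hmy]; push_cast; rfl
            · have : (my:ℝ) ≤ (mx:ℝ) := by exact_mod_cast hle
              rw [hmx]; linarith
        · -- z integer, z' not
          have hylt : (mx:ℝ) - 1 < z'.re := by
            by_contra hcon
            push_neg at hcon
            have hne : z'.re ≠ ((mx - 1 : ℤ) : ℝ) := fun h => hyi ⟨mx - 1, h⟩
            have hlt : z'.re < (mx:ℝ) - 1 := lt_of_le_of_ne hcon (by push_cast at hne ⊢; exact hne)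
            set k : ℤ := ⌊z'.re⌋ + 2 with hk
            have hfl : (⌊z'.re⌋ : ℝ) < z'.re :=
              lt_of_le_of_ne (Int.floor_le _) (fun h => hyi ⟨⌊z'.re⌋, h.symm⟩)
            have hfu : z'.re < (⌊z'.re⌋ : ℝ) + 1 := Int.lt_floor_add_one _
            have hkm : k ≤ mx := by
              have : ⌊z'.re⌋ < mx - 1 := by
                have := lt_of_le_of_lt (Int.floor_le z'.re) hlt
                exact_mod_cast this
              omega
            have hkr : (k : ℝ) ≤ (mx : ℝ) := by exact_mod_cast hkm
            have hpx : 0 < Real.Gamma (z.re - k + 1) := by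
              apply Real.Gamma_pos_of_pos; rw [hmx]; linarith
            have hny : Real.Gamma (z'.re - k + 1) < 0 := by
              have hs := gamma_sign 1 (z'.re - k + 1) ?_ ?_
              · simpa using (by linarith [hs] : Real.Gamma (z'.re - k + 1) < 0)
              · push_cast [hk]; linarith
              · push_cast [hk]; linarith
            have : (Real.Gamma (z.re - k + 1) * Real.Gamma (z'.re - k + 1))⁻¹ < 0 :=
              inv_lt_zero.mpr (mul_neg_of_pos_of_neg hpx hny)
            linarith [hg k]
          refine Or.inr (Or.inr ⟨mx, Or.inl ⟨?_, him', hylt⟩⟩)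
          rw [hz, hmx]; push_cast; rfl
      · by_cases hyi : ∃ mi : ℤ, z'.re = (mi : ℝ)
        · -- z' integer, z not
          obtain ⟨my, hmy⟩ := hyi
          have hxlt : (my:ℝ) - 1 < z.re := by
            by_contra hcon
            push_neg at hcon
            have hne : z.re ≠ ((my - 1 : ℤ) : ℝ) := fun h => hxi ⟨my - 1, h⟩
            have hlt : z.re < (my:ℝ) - 1 := lt_of_le_of_ne hcon (by push_cast at hne ⊢; exact hne)
            set k : ℤ := ⌊z.re⌋ + 2 with hk
            have hfl : (⌊z.re⌋ : ℝ) < z.re :=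
              lt_of_le_of_ne (Int.floor_le _) (fun h => hxi ⟨⌊z.re⌋, h.symm⟩)
            have hfu : z.re < (⌊z.re⌋ : ℝ) + 1 := Int.lt_floor_add_one _
            have hkm : k ≤ my := by
              have : ⌊z.re⌋ < my - 1 := by
                have := lt_of_le_of_lt (Int.floor_le z.re) hlt
                exact_mod_cast this
              omega
            have hkr : (k : ℝ) ≤ (my : ℝ) := by exact_mod_cast hkm
            have hpy : 0 < Real.Gamma (z'.re - k + 1) := by
              apply Real.Gamma_pos_of_pos; rw [hmy]; linarith
            have hnx : Real.Gamma (z.re - k + 1) < 0 := by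
              have hs := gamma_sign 1 (z.re - k + 1) ?_ ?_
              · simpa using (by linarith [hs] : Real.Gamma (z.re - k + 1) < 0)
              · push_cast [hk]; linarith
              · push_cast [hk]; linarith
            have : (Real.Gamma (z.re - k + 1) * Real.Gamma (z'.re - k + 1))⁻¹ < 0 :=
              inv_lt_zero.mpr (mul_neg_of_neg_of_pos hnx hpy)
            linarith [hg k]
          refine Or.inr (Or.inr ⟨my, Or.inr ⟨?_, him, hxlt⟩⟩)
          rw [hz', hmy]; push_cast; rfl
        · -- neither integer
          have gne : ∀ k : ℤ, Real.Gamma (z.re - k + 1) ≠ 0 := by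
            intro k
            apply Real.Gamma_ne_zero
            intro n h
            exact hxi ⟨k - 1 - n, by push_cast; linarith⟩
          have gne' : ∀ k : ℤ, Real.Gamma (z'.re - k + 1) ≠ 0 := by
            intro k
            apply Real.Gamma_ne_zero
            intro n h
            exact hyi ⟨k - 1 - n, by push_cast; linarith⟩
          have gpos : ∀ k : ℤ, 0 < (Real.Gamma (z.re - k + 1) * Real.Gamma (z'.re - k + 1))⁻¹ :=
            fun k => lt_of_le_of_ne (hg k)
              (Ne.symm (inv_ne_zero (mul_ne_zero (gne k) (gne' k))))
          have hq2 : ∀ k : ℤ, 0 < (z.re - k) * (z'.re - k) := by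
            intro k
            have h0 := gpos k
            have h1 := gpos (k + 1)
            rw [real_pair_rec z.re z'.re k] at h1
            nlinarith [h0, h1]
          set m : ℤ := ⌊z.re⌋ with hm
          have hx1 : (m : ℝ) < z.re :=
            lt_of_le_of_ne (Int.floor_le _) (fun h => hxi ⟨m, h.symm⟩)
          have hx2 : z.re < (m : ℝ) + 1 := Int.lt_floor_add_one _
          have hy1 : (m : ℝ) < z'.re := by nlinarith [hq2 m]
          have hy2 : z'.re < (m : ℝ) + 1 := by
            have := hq2 (m + 1)
            push_cast at this
            nlinarith [this]
          exact Or.inr (Or.inl ⟨him, him', m, hx1, hx2, hy1, hy2⟩)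
    · -- conjugate case
      have him' : z'.im = -z.im := by linarith
      have hre : z'.re = z.re := by
        have h3 : z.im * (z'.re - z.re) = 0 := by linear_combination hP - z.re * hS
        have := (mul_eq_zero.mp h3).resolve_left him
        linarith
      exact Or.inl ⟨Complex.ext (by rw [Complex.conj_re]; exact hre)
        (by rw [Complex.conj_im]; exact him'), him⟩
  · intro h
    intro k
    rcases h with ⟨hz', _⟩ | ⟨him, him', m, h1, h2, h3, h4⟩ | ⟨m, ⟨hzm, him', hy⟩ | ⟨hz'm, him, hy⟩⟩
    · refine ⟨(Complex.normSq (Complex.Gamma (z - k + 1)))⁻¹, inv_nonneg.mpr (Complex.normSq_nonneg _), ?_⟩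
      have e : z' - k + 1 = (starRingEnd ℂ) (z - k + 1) := by
        rw [hz']; simp [map_sub, map_add]
      rw [e, Complex.Gamma_conj, Complex.mul_conj, ← Complex.ofReal_inv]
    · have hz : z = ((z.re : ℝ) : ℂ) := Complex.ext rfl (by simp [him])
      have hz' : z' = ((z'.re : ℝ) : ℂ) := Complex.ext rfl (by simp [him'])
      refine ⟨(Real.Gamma (z.re - k + 1) * Real.Gamma (z'.re - k + 1))⁻¹,
        bwd_interval z.re z'.re m h1 h2 h3 h4 k, ?_⟩
      rw [hz, hz', real_reduce]; simp
    · have hz : z = (((m : ℝ) : ℝ) : ℂ) := by rw [hzm]; push_cast; rfl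
      have hz' : z' = ((z'.re : ℝ) : ℂ) := Complex.ext rfl (by simp [him'])
      refine ⟨(Real.Gamma ((m:ℝ) - k + 1) * Real.Gamma (z'.re - k + 1))⁻¹,
        bwd_degen z'.re m hy k, ?_⟩
      rw [hz, hz', real_reduce]; simp
    · have hz' : z' = (((m : ℝ) : ℝ) : ℂ) := by rw [hz'm]; push_cast; rfl
      have hz : z = ((z.re : ℝ) : ℂ) := Complex.ext rfl (by simp [him])
      refine ⟨(Real.Gamma (z.re - k + 1) * Real.Gamma ((m:ℝ) - k + 1))⁻¹, ?_, ?_⟩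
      · have h0 := bwd_degen z.re m hy k
        rwa [inv_nonneg, mul_comm, ← inv_nonneg] at h0
      · rw [hz, hz', real_reduce]; simp
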